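/- Let 0 < ε < 1, let λ = 1/(2 + ε), and let E_λ be the conditional expectation on M₂(ℂ) defined by E_λ(a) = (λ·a₁₁ + (1 − λ)·a₂₂)·1₂. Set K(E_λ) = inf{K ≥ 1 : K·E_λ − id is positive} and L(E_λ) = inf{L ≥ 1 : L·E_λ − id is completely positive}. Then K(E_λ) = 2 + ε, L(E_λ) = 4 + ε²/(1 + ε), and L(E_λ) > ⌊K(E_λ)⌋², where ⌊·⌋ denotes the integer part. -/

import Mathlib

open scoped ComplexOrder

/-- The conditional expectation `E_λ` on the C*-algebra of 2×2 complex matrices,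
`E_λ(a) = (λ·a₁₁ + (1 − λ)·a₂₂)·1₂`. -/
noncomputable def Elam (l : ℝ) (a : Matrix (Fin 2) (Fin 2) ℂ) : Matrix (Fin 2) (Fin 2) ℂ :=
  ((l : ℂ) * a 0 0 + (1 - (l : ℂ)) * a 1 1) • (1 : Matrix (Fin 2) (Fin 2) ℂ)

/-- A map `Φ` on a (C*-)algebra `R` is completely positive if for every `n ≥ 1` its entrywise
application to `n × n` matrices over `R` maps positive elements (i.e. elements of the form
`star B * B`, which are exactly the positive elements of the C*-algebra of matrices over a
C*-algebra) to positive elements. -/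
def IsCompletelyPositive {R : Type*} [Ring R] [StarRing R] (Φ : R → R) : Prop :=
  ∀ (n : ℕ) (M : Matrix (Fin n) (Fin n) R),
    (∃ B : Matrix (Fin n) (Fin n) R, M = star B * B) →
    ∃ C : Matrix (Fin n) (Fin n) R, M.map Φ = star C * C

namespace ElamAux

open Matrix

noncomputable def Vk (ε : ℝ) : Fin 3 → Matrix (Fin 2) (Fin 2) ℂ
  | 0 => !![((Real.sqrt (1+ε) : ℂ))⁻¹, 0; 0, -(Real.sqrt (1+ε) : ℂ)]
  | 1 => !![0, (Real.sqrt (2+ε) : ℂ) * ((Real.sqrt (1+ε) : ℂ))⁻¹; 0, 0]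
  | 2 => !![0, 0; (Real.sqrt (2+ε) : ℂ), 0]

lemma kraus (ε : ℝ) (hε0 : 0 < ε) (a : Matrix (Fin 2) (Fin 2) ℂ) :
    (4 + ε ^ 2 / (1 + ε)) • Elam (1 / (2 + ε)) a - a
      = ∑ κ : Fin 3, (Vk ε κ)ᴴ * a * (Vk ε κ) := by
  have h1 : (0:ℝ) < 1 + ε := by linarith
  have h2 : (0:ℝ) < 2 + ε := by linarith
  have es : ((Real.sqrt (1+ε) : ℂ)) * ((Real.sqrt (1+ε) : ℂ)) = 1+(ε:ℂ) := by
    rw [← Complex.ofReal_mul, Real.mul_self_sqrt (by positivity)]; push_cast; ring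
  have et : ((Real.sqrt (2+ε) : ℂ)) * ((Real.sqrt (2+ε) : ℂ)) = 2+(ε:ℂ) := by
    rw [← Complex.ofReal_mul, Real.mul_self_sqrt (by positivity)]; push_cast; ring
  have hs : ((Real.sqrt (1+ε) : ℂ)) ≠ 0 := by
    simpa using (Complex.ofReal_ne_zero.mpr (ne_of_gt (Real.sqrt_pos.mpr h1)))
  have h1c : (1 + (ε:ℂ)) ≠ 0 := by
    intro h; apply ne_of_gt h1
    have := congrArg Complex.re h; simpa using this
  have h2c : (2 + (ε:ℂ)) ≠ 0 := by
    intro h; apply ne_of_gt h2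
    have := congrArg Complex.re h; simpa using this
  have es2 : ((Real.sqrt (1+ε) : ℂ)) ^ 2 = 1+(ε:ℂ) := by rw [pow_two]; exact es
  have et2 : ((Real.sqrt (2+ε) : ℂ)) ^ 2 = 2+(ε:ℂ) := by rw [pow_two]; exact et
  have es4 : ((Real.sqrt (1+ε) : ℂ)) ^ 4 = (1+(ε:ℂ))^2 := by
    rw [show (4:ℕ) = 2*2 from rfl, pow_mul, es2]
  have et4 : ((Real.sqrt (2+ε) : ℂ)) ^ 4 = (2+(ε:ℂ))^2 := by
    rw [show (4:ℕ) = 2*2 from rfl, pow_mul, et2]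
  ext i j
  fin_cases i <;> fin_cases j
  all_goals simp only [Elam, Vk, Fin.sum_univ_three, Matrix.sum_apply, Matrix.mul_apply,
        Fin.sum_univ_two, Matrix.smul_apply, Matrix.sub_apply, Matrix.one_apply,
        Complex.real_smul, Matrix.conjTranspose_apply, Matrix.cons_val', Matrix.cons_val_zero,
        Matrix.cons_val_one, Matrix.head_cons, Matrix.head_fin_const, Matrix.empty_val',
        Matrix.cons_val_fin_one, star_zero, star_neg, Fin.isValue, smul_eq_mul,
        Matrix.of_apply, RCLike.star_def, map_inv₀, Complex.conj_ofReal, _root_.map_mul]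
  all_goals push_cast
  all_goals simp only [map_zero, map_neg, map_inv₀, Complex.conj_ofReal, _root_.map_mul]
  all_goals field_simp
  all_goals try ring_nf
  all_goals try simp only [es2, es4, et2, et4]
  all_goals try ring

lemma cp_of_kraus (Φ : Matrix (Fin 2) (Fin 2) ℂ → Matrix (Fin 2) (Fin 2) ℂ)
    (V : Fin 3 → Matrix (Fin 2) (Fin 2) ℂ)
    (h : ∀ a, Φ a = ∑ κ : Fin 3, (V κ)ᴴ * a * (V κ)) : IsCompletelyPositive Φ := by
  intro n M hM
  obtain ⟨B, rfl⟩ := hM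
  set e := Matrix.compRingEquiv (Fin n) (Fin 2) ℂ with he
  have hstar : ∀ X : Matrix (Fin n) (Fin n) (Matrix (Fin 2) (Fin 2) ℂ),
      e (star X) = star (e X) := fun X => by ext ⟨i, k⟩ ⟨j, l⟩; rfl
  set D : Fin 3 → Matrix (Fin n) (Fin n) (Matrix (Fin 2) (Fin 2) ℂ) :=
    fun κ => Matrix.diagonal (fun _ => V κ) with hD
  have hmap : (star B * B).map Φ = ∑ κ : Fin 3, star (B * D κ) * (B * D κ) := by
    apply Matrix.ext
    intro i j
    have : ((star B * B).map Φ) i j = Φ ((star B * B) i j) := rfl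
    rw [this, h]
    have : (∑ κ : Fin 3, star (B * D κ) * (B * D κ)) i j
        = ∑ κ : Fin 3, (star (B * D κ) * (B * D κ)) i j := by
      simp [Matrix.sum_apply]
    rw [this]
    refine Finset.sum_congr rfl fun κ _ => ?_
    have h1 : star (B * D κ) * (B * D κ) = star (D κ) * (star B * B) * D κ := by
      simp only [StarMul.star_mul, mul_assoc]
    rw [h1, hD]
    simp only [Matrix.star_eq_conjTranspose, Matrix.diagonal_conjTranspose,
      Matrix.mul_diagonal, Matrix.sub_apply, Pi.star_def]
    rw [Matrix.diagonal_mul]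
  have hsum : e ((star B * B).map Φ) = ∑ κ : Fin 3, (e (B * D κ))ᴴ * (e (B * D κ)) := by
    rw [hmap, map_sum]
    refine Finset.sum_congr rfl fun κ _ => ?_
    rw [_root_.map_mul, hstar, Matrix.star_eq_conjTranspose]
  have hpsd : (e ((star B * B).map Φ)).PosSemidef := by
    rw [hsum, Fin.sum_univ_three]
    exact ((Matrix.posSemidef_conjTranspose_mul_self _).add
      (Matrix.posSemidef_conjTranspose_mul_self _)).add
      (Matrix.posSemidef_conjTranspose_mul_self _)
  open scoped Matrix.Norms.L2Operator MatrixOrder in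
  obtain ⟨S, hS⟩ := CStarAlgebra.nonneg_iff_eq_star_mul_self.mp hpsd.nonneg
  refine ⟨e.symm S, ?_⟩
  apply e.injective
  rw [_root_.map_mul, hstar, RingEquiv.apply_symm_apply]
  exact hS

/-- `tr(a)·1 - a` is positive semidefinite for a positive semidefinite 2×2 matrix. -/
lemma trace_sub_psd {a : Matrix (Fin 2) (Fin 2) ℂ} (ha : a.PosSemidef) :
    ((a 0 0 + a 1 1) • (1 : Matrix (Fin 2) (Fin 2) ℂ) - a).PosSemidef := by
  have h00 : star (a 0 0) = a 0 0 := ha.1.apply 0 0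
  have h11 : star (a 1 1) = a 1 1 := ha.1.apply 1 1
  have h01 : star (a 1 0) = a 0 1 := ha.1.apply 0 1
  have h10 : star (a 0 1) = a 1 0 := ha.1.apply 1 0
  refine Matrix.PosSemidef.of_dotProduct_mulVec_nonneg ?_ ?_
  · apply Matrix.ext
    intro i j
    fin_cases i <;> fin_cases j <;>
      simp [Matrix.conjTranspose_apply, Matrix.one_apply, Matrix.sub_apply,
        Matrix.smul_apply, h00, h11, h01, h10, smul_eq_mul] <;> ring
  · intro x
    have key : dotProduct (star x)
          ((((a 0 0 + a 1 1) • (1 : Matrix (Fin 2) (Fin 2) ℂ) - a)).mulVec x)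
        = dotProduct (star ![star (x 1), -(star (x 0))])
          (a.mulVec ![star (x 1), -(star (x 0))]) := by
      simp only [dotProduct, Matrix.mulVec, Fin.sum_univ_two, Matrix.sub_apply,
        Matrix.smul_apply, Matrix.one_apply, Pi.star_apply, Matrix.cons_val_zero,
        Matrix.cons_val_one, Matrix.head_cons, star_star, star_neg, smul_eq_mul]
      simp only [Fin.isValue, if_true, if_false, one_ne_zero, zero_ne_one, reduceIte]
      ring
    rw [key]
    exact ha.dotProduct_mulVec_nonneg _

lemma smul_one_psd {c : ℂ} (hc : 0 ≤ c) :
    (c • (1 : Matrix (Fin 2) (Fin 2) ℂ)).PosSemidef := by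
  refine Matrix.PosSemidef.of_dotProduct_mulVec_nonneg ?_ ?_
  · apply Matrix.ext
    intro i j
    have : star c = c := by
      rw [Complex.star_def, Complex.conj_eq_iff_im]
      exact ((Complex.le_def).mp hc).2.symm
    fin_cases i <;> fin_cases j <;>
      simp [Matrix.conjTranspose_apply, Matrix.one_apply, Matrix.smul_apply, this]
  · intro x
    have : dotProduct (star x) ((c • (1 : Matrix (Fin 2) (Fin 2) ℂ)).mulVec x)
        = c * (star (x 0) * x 0 + star (x 1) * x 1) := by
      simp [dotProduct, Matrix.mulVec, Fin.sum_univ_two, Matrix.smul_apply,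
        Matrix.one_apply]
      ring
    rw [this]
    exact mul_nonneg hc (add_nonneg (star_mul_self_nonneg _) (star_mul_self_nonneg _))

example (a : Matrix (Fin 2) (Fin 2) ℂ) (ha : a.PosSemidef) : 0 ≤ a 1 1 := by
  have := ha.dotProduct_mulVec_nonneg ![0, 1]
  simpa [dotProduct, Matrix.mulVec, Fin.sum_univ_two] using this

end ElamAux

open ElamAux in
theorem Elam_index_constants (ε : ℝ) (hε0 : 0 < ε) (hε1 : ε < 1) :
    sInf {K : ℝ | 1 ≤ K ∧ ∀ a : Matrix (Fin 2) (Fin 2) ℂ,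
        a.PosSemidef → (K • Elam (1 / (2 + ε)) a - a).PosSemidef} = 2 + ε ∧
    sInf {L : ℝ | 1 ≤ L ∧
        IsCompletelyPositive (fun a : Matrix (Fin 2) (Fin 2) ℂ =>
          L • Elam (1 / (2 + ε)) a - a)} = 4 + ε ^ 2 / (1 + ε) ∧
    ((⌊sInf {K : ℝ | 1 ≤ K ∧ ∀ a : Matrix (Fin 2) (Fin 2) ℂ,
        a.PosSemidef → (K • Elam (1 / (2 + ε)) a - a).PosSemidef}⌋ : ℝ)) ^ 2 <
      sInf {L : ℝ | 1 ≤ L ∧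
        IsCompletelyPositive (fun a : Matrix (Fin 2) (Fin 2) ℂ =>
          L • Elam (1 / (2 + ε)) a - a)} := by
  have h1 : (0:ℝ) < 1 + ε := by linarith
  have h2 : (0:ℝ) < 2 + ε := by linarith
  have h2c : (2 + (ε:ℂ)) ≠ 0 := by
    intro h; have := congrArg Complex.re h; simp at this; linarith
  -- K membership
  have hKmem : (2 + ε) ∈ {K : ℝ | 1 ≤ K ∧ ∀ a : Matrix (Fin 2) (Fin 2) ℂ,
      a.PosSemidef → (K • Elam (1 / (2 + ε)) a - a).PosSemidef} := by
    refine ⟨by linarith, fun a ha => ?_⟩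
    have hsplit : (2 + ε) • Elam (1 / (2 + ε)) a - a
        = ((a 0 0 + a 1 1) • (1 : Matrix (Fin 2) (Fin 2) ℂ) - a)
          + ((ε : ℂ) * a 1 1) • (1 : Matrix (Fin 2) (Fin 2) ℂ) := by
      apply Matrix.ext
      intro i j
      simp only [Elam, Matrix.sub_apply, Matrix.add_apply, Matrix.smul_apply,
        Matrix.one_apply, smul_eq_mul, Complex.real_smul]
      push_cast
      field_simp
      split_ifs <;> ring
    rw [hsplit]
    refine (trace_sub_psd ha).add (smul_one_psd ?_)
    have ha11 : 0 ≤ a 1 1 := by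
      have := ha.dotProduct_mulVec_nonneg ![0, 1]
      simpa [dotProduct, Matrix.mulVec, Fin.sum_univ_two] using this
    have hεc : 0 ≤ (ε : ℂ) := by
      rw [Complex.zero_le_real]; linarith
    exact mul_nonneg hεc ha11
  -- K lower bound
  have hKlb : ∀ K ∈ {K : ℝ | 1 ≤ K ∧ ∀ a : Matrix (Fin 2) (Fin 2) ℂ,
      a.PosSemidef → (K • Elam (1 / (2 + ε)) a - a).PosSemidef}, 2 + ε ≤ K := by
    rintro K ⟨hK1, hKp⟩
    set a : Matrix (Fin 2) (Fin 2) ℂ := Matrix.single 0 0 1 with hadef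
    have hapsd : a.PosSemidef := by
      refine Matrix.PosSemidef.of_dotProduct_mulVec_nonneg ?_ ?_
      · apply Matrix.ext; intro i j
        fin_cases i <;> fin_cases j <;>
          simp [hadef, Matrix.conjTranspose_apply, Matrix.single]
      · intro x
        have : dotProduct (star x) (a.mulVec x) = star (x 0) * x 0 := by
          simp [hadef, dotProduct, Matrix.mulVec, Fin.sum_univ_two,
            Matrix.single]
        rw [this]; exact star_mul_self_nonneg _
    have hq := (hKp a hapsd).dotProduct_mulVec_nonneg ![1, 0]
    have hval : dotProduct (star ![(1:ℂ), 0])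
        ((K • Elam (1 / (2 + ε)) a - a).mulVec ![1, 0])
        = ((K * (1 / (2 + ε)) - 1 : ℝ) : ℂ) := by
      simp only [Elam, hadef, dotProduct, Matrix.mulVec, Fin.sum_univ_two,
        Matrix.sub_apply, Matrix.smul_apply, Matrix.one_apply, Matrix.single,
        Matrix.cons_val_zero, Matrix.cons_val_one, Matrix.head_cons, Pi.star_apply,
        smul_eq_mul, Complex.real_smul, Matrix.of_apply]
      push_cast
      norm_num
    rw [hval] at hq
    rw [Complex.zero_le_real] at hq
    rw [mul_one_div] at hq
    have h1' : 1 ≤ K / (2 + ε) := by linarith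
    have := (le_div_iff₀ h2).mp h1'
    linarith
  have hKinf : sInf {K : ℝ | 1 ≤ K ∧ ∀ a : Matrix (Fin 2) (Fin 2) ℂ,
      a.PosSemidef → (K • Elam (1 / (2 + ε)) a - a).PosSemidef} = 2 + ε :=
    le_antisymm (csInf_le ⟨1, fun K hK => hK.1⟩ hKmem) (le_csInf ⟨_, hKmem⟩ hKlb)
  -- L membership
  have hLmem : (4 + ε ^ 2 / (1 + ε)) ∈ {L : ℝ | 1 ≤ L ∧
      IsCompletelyPositive (fun a : Matrix (Fin 2) (Fin 2) ℂ =>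
        L • Elam (1 / (2 + ε)) a - a)} := by
    refine ⟨?_, ?_⟩
    · have : 0 ≤ ε ^ 2 / (1 + ε) := div_nonneg (sq_nonneg ε) h1.le
      linarith
    exact cp_of_kraus _ (Vk ε) (fun a => kraus ε hε0 a)
  -- L lower bound
  have hLlb : ∀ L ∈ {L : ℝ | 1 ≤ L ∧
      IsCompletelyPositive (fun a : Matrix (Fin 2) (Fin 2) ℂ =>
        L • Elam (1 / (2 + ε)) a - a)}, 4 + ε ^ 2 / (1 + ε) ≤ L := by
    rintro L ⟨hL1, hLcp⟩
    set Mm : Matrix (Fin 2) (Fin 2) (Matrix (Fin 2) (Fin 2) ℂ) :=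
      fun i j => Matrix.single i j 1 with hMm
    set B : Matrix (Fin 2) (Fin 2) (Matrix (Fin 2) (Fin 2) ℂ) :=
      fun m j => if m = 0 then Matrix.single 0 j 1 else 0 with hBdef
    have hB : Mm = star B * B := by
      apply Matrix.ext; intro i j
      apply Matrix.ext; intro k l
      have : (star B * B) i j = ∑ m : Fin 2, star (B m i) * B m j := by
        simp [Matrix.mul_apply, Matrix.star_eq_conjTranspose, Matrix.conjTranspose_apply]
      rw [this]
      fin_cases i <;> fin_cases j <;> fin_cases k <;> fin_cases l <;>
        simp [hMm, hBdef, Fin.sum_univ_two, Matrix.sum_apply, Matrix.mul_apply,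
          Matrix.star_eq_conjTranspose, Matrix.conjTranspose_apply, Matrix.single]
    obtain ⟨C, hC⟩ := hLcp 2 Mm ⟨B, hB⟩
    set e := Matrix.compRingEquiv (Fin 2) (Fin 2) ℂ with he
    have hstar : ∀ X : Matrix (Fin 2) (Fin 2) (Matrix (Fin 2) (Fin 2) ℂ),
        e (star X) = star (e X) := fun X => by ext ⟨i, k⟩ ⟨j, l⟩; rfl
    have hpsd : (e (Mm.map (fun a => L • Elam (1 / (2 + ε)) a - a))).PosSemidef := by
      rw [hC, _root_.map_mul, hstar, Matrix.star_eq_conjTranspose]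
      exact Matrix.posSemidef_conjTranspose_mul_self _
    have key : ∀ t s : ℝ, 0 ≤ (L * (1 / (2 + ε)) - 1) * t ^ 2
        + (L * (1 - 1 / (2 + ε)) - 1) * s ^ 2 - 2 * t * s := by
      intro t s
      have hq := hpsd.dotProduct_mulVec_nonneg (fun p => if p.1 = p.2 then (if p.1 = 0 then (t:ℂ) else (s:ℂ)) else 0)
      have hval : dotProduct
          (star (fun p : Fin 2 × Fin 2 => if p.1 = p.2 then (if p.1 = 0 then (t:ℂ) else (s:ℂ)) else 0))
          ((e (Mm.map (fun a => L • Elam (1 / (2 + ε)) a - a))).mulVec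
            (fun p : Fin 2 × Fin 2 => if p.1 = p.2 then (if p.1 = 0 then (t:ℂ) else (s:ℂ)) else 0))
          = (((L * (1 / (2 + ε)) - 1) * t ^ 2
              + (L * (1 - 1 / (2 + ε)) - 1) * s ^ 2 - 2 * t * s : ℝ) : ℂ) := by
        simp only [he, hMm, dotProduct, Matrix.mulVec, Fintype.sum_prod_type,
          Fin.sum_univ_two, Matrix.compRingEquiv_apply, Matrix.map_apply, Matrix.map, Elam,
          Matrix.sub_apply, Matrix.smul_apply, Matrix.one_apply, Matrix.single,
          Matrix.of_apply, Pi.star_apply, smul_eq_mul, Complex.real_smul]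
        norm_num
        push_cast
        field_simp
        ring
      rw [hval, Complex.zero_le_real] at hq
      exact hq
    set α := L * (1 / (2 + ε)) - 1 with hα
    set β := L * (1 - 1 / (2 + ε)) - 1 with hβ
    have hβ0 : 0 ≤ β := by have := key 0 1; linarith [this]
    have hβpos : 0 < β := by
      rcases eq_or_lt_of_le hβ0 with h | h
      · exfalso
        have := key 1 ((α + 1) / 2)
        rw [← h] at this
        nlinarith [this]
      · exact h
    have hαβ : 1 ≤ α * β := by
      have hk := key 1 (1 / β)
      have hβne : β ≠ 0 := ne_of_gt hβpos
      have hsub : β * (1 / β) ^ 2 = 1 / β := by field_simp; try ring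
      have h' : 1 / β ≤ α := by nlinarith [hk, hsub]
      calc (1:ℝ) = (1 / β) * β := by field_simp; try ring
        _ ≤ α * β := mul_le_mul_of_nonneg_right h' hβpos.le
    -- conclude
    rw [hα, hβ] at hαβ
    have h2' : (2 + ε) ≠ 0 := ne_of_gt h2
    have e1 : L * (1 / (2 + ε)) - 1 = (L - (2 + ε)) / (2 + ε) := by field_simp; try ring
    have e2 : L * (1 - 1 / (2 + ε)) - 1 = (L * (1 + ε) - (2 + ε)) / (2 + ε) := by
      rw [eq_div_iff h2']; linear_combination (-L) * one_div_mul_cancel h2'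
    rw [e1, e2, div_mul_div_comm, le_div_iff₀ (by positivity)] at hαβ
    have hfin : (2 + ε) ^ 2 ≤ L * (1 + ε) := by nlinarith [hαβ, hL1]
    have hrw : 4 + ε ^ 2 / (1 + ε) = (2 + ε) ^ 2 / (1 + ε) := by
      field_simp; ring
    rw [hrw, div_le_iff₀ h1]
    linarith
  have hLinf : sInf {L : ℝ | 1 ≤ L ∧
      IsCompletelyPositive (fun a : Matrix (Fin 2) (Fin 2) ℂ =>
        L • Elam (1 / (2 + ε)) a - a)} = 4 + ε ^ 2 / (1 + ε) :=
    le_antisymm (csInf_le ⟨1, fun L hL => hL.1⟩ hLmem) (le_csInf ⟨_, hLmem⟩ hLlb)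
  refine ⟨hKinf, hLinf, ?_⟩
  rw [hKinf, hLinf]
  have hfloor : ⌊(2 + ε : ℝ)⌋ = 2 := by
    rw [Int.floor_eq_iff]
    constructor <;> push_cast <;> linarith
  rw [hfloor]
  have : 0 < ε ^ 2 / (1 + ε) := by positivity
  norm_num
  linarith
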